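/- Let Y = {(z,w) ∈ ℂ × ℂ* : Im z < |w| < 2π + Im z}, where ℂ* = ℂ ∖ {0}. Then the map p : Y → ℂ* × ℂ* defined by p(z,w) = (e^z, w) is injective. -/

import Mathlib

/-- Remark 3.2: the map `(z,w) ↦ (eᶻ, w)` is injective on
`Y = {(z,w) ∈ ℂ × ℂ* : Im z < |w| < 2π + Im z}`. -/
theorem stmt_16 :
    Set.InjOn (fun p : ℂ × ℂ => (Complex.exp p.1, p.2))
      {p : ℂ × ℂ | p.2 ≠ 0 ∧ p.1.im < ‖p.2‖ ∧
        ‖p.2‖ < 2 * Real.pi + p.1.im} := by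
  rintro ⟨z₁, w₁⟩ ⟨hw₁, h₁, h₁'⟩ ⟨z₂, w₂⟩ ⟨hw₂, h₂, h₂'⟩ h
  simp only [Prod.mk.injEq] at h
  obtain ⟨he, hw⟩ := h
  subst hw
  rw [Complex.exp_eq_exp_iff_exists_int] at he
  obtain ⟨n, hn⟩ := he
  have him : z₁.im = z₂.im + n * (2 * Real.pi) := by
    have := congrArg Complex.im hn
    simpa [Complex.add_im, Complex.mul_im, Complex.mul_re] using this
  have hpi := Real.pi_pos
  have hn0 : n = 0 := by
    have hlt : |(n : ℝ) * (2 * Real.pi)| < 2 * Real.pi := by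
      rw [abs_lt]
      constructor <;> nlinarith
    rcases lt_trichotomy n 0 with h | h | h
    · exfalso
      have : (1 : ℝ) ≤ |(n : ℝ)| := by
        have : (1 : ℤ) ≤ |n| := Int.one_le_abs (by omega)
        exact_mod_cast (by simpa using this : (1:ℤ) ≤ |n|)
      rw [abs_mul] at hlt
      nlinarith [abs_nonneg ((n:ℝ) * (2 * Real.pi)), abs_of_pos (show (0:ℝ) < 2 * Real.pi by linarith)]
    · exact h
    · exfalso
      have : (1 : ℝ) ≤ |(n : ℝ)| := by
        have : (1 : ℤ) ≤ |n| := Int.one_le_abs (by omega)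
        exact_mod_cast (by simpa using this : (1:ℤ) ≤ |n|)
      rw [abs_mul] at hlt
      nlinarith [abs_of_pos (show (0:ℝ) < 2 * Real.pi by linarith)]
  subst hn0
  simp at hn
  simp [hn]
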